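/- arXiv:2311.08947 — 2 statements merged into one kernel-verified Lean document; each statement's English description precedes it below -/
import Mathlib

section
/- Let n ≥ 1, let α = (α_1,…,α_n) ∈ ℂⁿ with Re α_i > 0 for all i, and let μ ∈ ℂ with Re μ > 0. Then the integral ∫_{Δ_n} (∏_{i=1}^n t_i^{α_i−1}) (1−|t|)^{μ−1} dt converges absolutely and equals Γ(α_1)⋯Γ(α_n)·Γ(μ) / Γ(α_1+⋯+α_n+μ). -/
open MeasureTheory Complex

noncomputable section

/-- The open simplex `{t ∈ ℝⁿ : tᵢ > 0, t₁ + ⋯ + tₙ < 1}`. -/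
def openSimplex (n : ℕ) : Set (Fin n → ℝ) := {t | (∀ i, 0 < t i) ∧ ∑ i, t i < 1}

private lemma myDet (n : ℕ) (c : ℝ) (s : Fin n → ℝ) :
    (((ContinuousLinearMap.fst ℝ ℝ (Fin n → ℝ)).prod
      (c • ContinuousLinearMap.snd ℝ ℝ (Fin n → ℝ) +
        (-(ContinuousLinearMap.fst ℝ ℝ (Fin n → ℝ))).smulRight s)).det) = c ^ n := by
  have h : (((ContinuousLinearMap.fst ℝ ℝ (Fin n → ℝ)).prod
      (c • ContinuousLinearMap.snd ℝ ℝ (Fin n → ℝ) +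
        (-(ContinuousLinearMap.fst ℝ ℝ (Fin n → ℝ))).smulRight s)) :
      (ℝ × (Fin n → ℝ)) →ₗ[ℝ] (ℝ × (Fin n → ℝ))).det = c ^ n := by
    set B : Module.Basis (Unit ⊕ Fin n) ℝ (ℝ × (Fin n → ℝ)) :=
      (Module.Basis.singleton Unit ℝ).prod (Pi.basisFun ℝ (Fin n))
    set L : (ℝ × (Fin n → ℝ)) →ₗ[ℝ] (ℝ × (Fin n → ℝ)) :=
      (((ContinuousLinearMap.fst ℝ ℝ (Fin n → ℝ)).prod
      (c • ContinuousLinearMap.snd ℝ ℝ (Fin n → ℝ) +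
        (-(ContinuousLinearMap.fst ℝ ℝ (Fin n → ℝ))).smulRight s)) :
      (ℝ × (Fin n → ℝ)) →ₗ[ℝ] (ℝ × (Fin n → ℝ))) with hL
    rw [← LinearMap.det_toMatrix B]
    have hM : LinearMap.toMatrix B B L =
        Matrix.fromBlocks (1 : Matrix Unit Unit ℝ) 0
          (Matrix.of fun i (_ : Unit) => -s i) (c • (1 : Matrix (Fin n) (Fin n) ℝ)) := by
      ext i j
      rw [LinearMap.toMatrix_apply]
      cases j with
      | inl j =>
        have hBj : B (Sum.inl j) = ((1 : ℝ), (0 : Fin n → ℝ)) := by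
          simp [B, Module.Basis.prod_apply, Module.Basis.singleton_apply]
        cases i with
        | inl i => simp [hBj, Matrix.fromBlocks, B, L, Module.Basis.prod_repr_inl]
        | inr i => simp [hBj, Matrix.fromBlocks, B, L, Module.Basis.prod_repr_inr]
      | inr j =>
        have hBj : B (Sum.inr j) = ((0 : ℝ), (Pi.single j 1 : Fin n → ℝ)) := by
          simp [B, Module.Basis.prod_apply]
        cases i with
        | inl i => simp [hBj, Matrix.fromBlocks, B, L, Module.Basis.prod_repr_inl]
        | inr i =>
          simp [hBj, Matrix.fromBlocks, B, L, Module.Basis.prod_repr_inr, Matrix.one_apply,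
            Pi.single_apply, mul_comm]
    rw [hM, Matrix.det_fromBlocks_zero₁₂, Matrix.det_one, Matrix.det_smul, Matrix.det_one]
    simp
  rw [ContinuousLinearMap.det]
  exact h

private lemma cpow_finset_sum {z : ℂ} (hz : z ≠ 0) {ι : Type*} (s : Finset ι) (w : ι → ℂ) :
    z ^ (∑ i ∈ s, w i) = ∏ i ∈ s, z ^ w i := by
  classical
  induction s using Finset.cons_induction with
  | empty => simp
  | cons i s his ih =>
    rw [Finset.sum_cons, Finset.prod_cons, Complex.cpow_add _ _ hz, ih]

private lemma isOpen_openSimplex (n : ℕ) : IsOpen (openSimplex n) := by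
  have h1 : IsOpen {t : Fin n → ℝ | ∀ i, 0 < t i} := by
    rw [Set.setOf_forall]
    exact isOpen_iInter_of_finite fun i =>
      isOpen_lt continuous_const (continuous_apply i)
  have h2 : IsOpen {t : Fin n → ℝ | ∑ i, t i < 1} :=
    isOpen_lt (by continuity) continuous_const
  exact (h1.inter h2 : IsOpen ({t : Fin n → ℝ | ∀ i, 0 < t i} ∩ _))

set_option maxHeartbeats 1000000 in
/-- Main induction: the statement for all `n`, including `n = 0`. -/
private lemma dirichlet_aux (μ : ℂ) (hμ : 0 < μ.re) :
    ∀ (n : ℕ) (α : Fin n → ℂ), (∀ i, 0 < (α i).re) →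
    IntegrableOn
      (fun t : Fin n → ℝ =>
        (∏ i, (t i : ℂ) ^ (α i - 1)) * ((1 - ∑ i, t i : ℝ) : ℂ) ^ (μ - 1))
      (openSimplex n) ∧
    ∫ t in openSimplex n,
        (∏ i, (t i : ℂ) ^ (α i - 1)) * ((1 - ∑ i, t i : ℝ) : ℂ) ^ (μ - 1)
      = (∏ i, Complex.Gamma (α i)) * Complex.Gamma μ /
          Complex.Gamma ((∑ i, α i) + μ) := by
  intro n
  induction n with
  | zero =>
    intro α hα
    have hset : openSimplex 0 = Set.univ := by
      ext t
      simp [openSimplex]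
    have hfun : (fun t : Fin 0 → ℝ =>
        (∏ i, (t i : ℂ) ^ (α i - 1)) * ((1 - ∑ i, t i : ℝ) : ℂ) ^ (μ - 1))
        = fun _ => (1 : ℂ) := by
      funext t
      simp
    have huniv : (volume : Measure (Fin 0 → ℝ)) Set.univ = 1 := by
      simp [volume_pi, Measure.pi_univ]
    constructor
    · rw [hfun, hset]
      refine integrableOn_const ?_
      rw [huniv]; exact ENNReal.one_ne_top
    · rw [hfun, hset]
      rw [setIntegral_const, measureReal_def, huniv]
      simp [div_self (Complex.Gamma_ne_zero_of_re_pos hμ)]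
  | succ n ih =>
    intro α hα
    -- setup
    set α0 := α 0 with hα0
    set αt : Fin n → ℂ := fun i => α i.succ with hαt
    have hα0re : 0 < α0.re := hα 0
    have hαtre : ∀ i, 0 < (αt i).re := fun i => hα i.succ
    set β : ℂ := (∑ i, αt i) + μ with hβdef
    have hβre : 0 < β.re := by
      rw [hβdef]
      simp only [Complex.add_re, Complex.re_sum]
      have h0 : 0 ≤ ∑ i, (αt i).re := Finset.sum_nonneg fun i _ => (hαtre i).le
      linarith
    obtain ⟨hψint, hψval⟩ := ih αt hαtre
    set ψ : (Fin n → ℝ) → ℂ := fun s =>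
      (∏ i, (s i : ℂ) ^ (αt i - 1)) * ((1 - ∑ i, s i : ℝ) : ℂ) ^ (μ - 1) with hψ
    set φ : ℝ → ℂ := fun x => (x : ℂ) ^ (α0 - 1) * ((1 - x : ℝ) : ℂ) ^ (β - 1) with hφ
    have hφfun : φ = fun x : ℝ => (x : ℂ) ^ (α0 - 1) * (1 - (x : ℂ)) ^ (β - 1) := by
      funext x; rw [hφ]; push_cast; ring_nf
    have hφint : IntegrableOn φ (Set.Ioo (0:ℝ) 1) := by
      have h := Complex.betaIntegral_convergent hα0re hβre
      rw [intervalIntegrable_iff_integrableOn_Ioc_of_le zero_le_one] at h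
      rw [hφfun]
      exact h.mono_set Set.Ioo_subset_Ioc_self
    have hφval : ∫ x in Set.Ioo (0:ℝ) 1, φ x = Complex.betaIntegral α0 β := by
      rw [hφfun, Complex.betaIntegral,
        intervalIntegral.integral_of_le zero_le_one, integral_Ioc_eq_integral_Ioo]
    -- sets and maps
    set U : Set (ℝ × (Fin n → ℝ)) := Set.Ioo (0:ℝ) 1 ×ˢ openSimplex n with hU
    have hUmeas : MeasurableSet U :=
      measurableSet_Ioo.prod (isOpen_openSimplex n).measurableSet
    set S : Set (ℝ × (Fin n → ℝ)) :=
      {q | 0 < q.1 ∧ (∀ i, 0 < q.2 i) ∧ q.1 + ∑ i, q.2 i < 1} with hS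
    set Φ : ℝ × (Fin n → ℝ) → ℝ × (Fin n → ℝ) := fun p => (p.1, (1 - p.1) • p.2) with hΦ
    set L : ℝ × (Fin n → ℝ) → (ℝ × (Fin n → ℝ)) →L[ℝ] ℝ × (Fin n → ℝ) := fun p =>
      (ContinuousLinearMap.fst ℝ ℝ (Fin n → ℝ)).prod
        ((1 - p.1) • ContinuousLinearMap.snd ℝ ℝ (Fin n → ℝ) +
          (-(ContinuousLinearMap.fst ℝ ℝ (Fin n → ℝ))).smulRight p.2) with hLdef
    have hderiv : ∀ p ∈ U, HasFDerivWithinAt Φ (L p) U p := by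
      intro p _
      exact ((hasFDerivAt_fst.prodMk
        ((hasFDerivAt_fst.const_sub (1:ℝ)).smul hasFDerivAt_snd))).hasFDerivWithinAt
    have hinj : Set.InjOn Φ U := by
      intro p hp q hq h
      simp only [hU, Set.mem_prod, Set.mem_Ioo] at hp hq
      obtain ⟨h1, h2⟩ := Prod.ext_iff.mp h
      simp only [hΦ] at h1 h2
      have hne : (1 - p.1) ≠ 0 := ne_of_gt (by have := hp.1.2; linarith)
      rw [← h1] at h2
      exact Prod.ext h1 (smul_right_injective (Fin n → ℝ) hne h2)
    have himg : Φ '' U = S := by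
      ext q
      constructor
      · rintro ⟨p, hp, rfl⟩
        simp only [hU, Set.mem_prod, Set.mem_Ioo, openSimplex, Set.mem_setOf_eq] at hp
        obtain ⟨⟨hx0, hx1⟩, hs0, hs1⟩ := hp
        have hc : 0 < 1 - p.1 := by linarith
        have hsum : ∑ i, ((1 - p.1) • p.2) i = (1 - p.1) * ∑ i, p.2 i := by
          simp [Finset.mul_sum]
        refine ⟨hx0, fun i => by
          simpa [hΦ] using mul_pos hc (hs0 i), ?_⟩
        simp only [hΦ]
        rw [hsum]
        nlinarith
      · rintro ⟨hq1, hq2, hq3⟩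
        have hsum0 : 0 ≤ ∑ i, q.2 i := Finset.sum_nonneg fun i _ => (hq2 i).le
        have hq1' : q.1 < 1 := by linarith
        have hc : 0 < 1 - q.1 := by linarith
        refine ⟨(q.1, (1 - q.1)⁻¹ • q.2), ?_, ?_⟩
        · simp only [hU, Set.mem_prod, Set.mem_Ioo, openSimplex, Set.mem_setOf_eq]
          refine ⟨⟨hq1, hq1'⟩, fun i => by
            simpa using mul_pos (inv_pos.2 hc) (hq2 i), ?_⟩
          have hsum : ∑ i, ((1 - q.1)⁻¹ • q.2) i = (1 - q.1)⁻¹ * ∑ i, q.2 i := by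
            simp [Finset.mul_sum]
          rw [hsum, inv_mul_lt_iff₀ hc]
          linarith
        · simp only [hΦ, smul_smul, mul_inv_cancel₀ hc.ne', one_smul]
    set g : ℝ × (Fin n → ℝ) → ℂ := fun q =>
      (q.1 : ℂ) ^ (α0 - 1) * ((∏ i, (q.2 i : ℂ) ^ (αt i - 1)) *
        ((1 - (q.1 + ∑ i, q.2 i) : ℝ) : ℂ) ^ (μ - 1)) with hg
    have hkey : Set.EqOn (fun p => |(L p).det| • g (Φ p)) (fun p => φ p.1 * ψ p.2) U := by
      intro p hp
      simp only [hU, Set.mem_prod, Set.mem_Ioo, openSimplex, Set.mem_setOf_eq] at hp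
      obtain ⟨⟨hx0, hx1⟩, hs0, hs1⟩ := hp
      set x := p.1
      set s := p.2
      have hc : 0 < 1 - x := by linarith
      have hcC : ((1 - x : ℝ) : ℂ) ≠ 0 := Complex.ofReal_ne_zero.mpr (ne_of_gt hc)
      have hdet : (L p).det = (1 - x) ^ n := myDet n (1 - x) s
      have hsum : ∑ i, ((1 - x) • s) i = (1 - x) * ∑ i, s i := by
        simp [Finset.mul_sum]
      have hlast : ((1 - (x + ∑ i, ((1 - x) • s) i) : ℝ) : ℂ) ^ (μ - 1)
          = ((1 - x : ℝ) : ℂ) ^ (μ - 1) * ((1 - ∑ i, s i : ℝ) : ℂ) ^ (μ - 1) := by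
        rw [hsum, show (1 - (x + (1 - x) * ∑ i, s i) : ℝ)
            = (1 - x) * (1 - ∑ i, s i) from by ring, Complex.ofReal_mul,
          mul_cpow_ofReal_nonneg hc.le (by linarith : (0:ℝ) ≤ 1 - ∑ i, s i)]
      have hprod : (∏ i, ((((1 - x) • s) i : ℝ) : ℂ) ^ (αt i - 1))
          = ((1 - x : ℝ) : ℂ) ^ (∑ i, (αt i - 1)) * ∏ i, (s i : ℂ) ^ (αt i - 1) := by
        rw [cpow_finset_sum hcC, ← Finset.prod_mul_distrib]
        refine Finset.prod_congr rfl fun i _ => ?_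
        have : (((1 - x) • s) i : ℝ) = (1 - x) * s i := by simp
        rw [this, Complex.ofReal_mul, mul_cpow_ofReal_nonneg hc.le (hs0 i).le]
      have hcpow : ((1 - x : ℝ) : ℂ) ^ (n : ℕ) *
          (((1 - x : ℝ) : ℂ) ^ (∑ i, (αt i - 1)) * ((1 - x : ℝ) : ℂ) ^ (μ - 1))
          = ((1 - x : ℝ) : ℂ) ^ (β - 1) := by
        rw [← Complex.cpow_natCast, ← Complex.cpow_add _ _ hcC, ← Complex.cpow_add _ _ hcC]
        congr 1
        have hsub : ∑ i, (αt i - 1) = (∑ i, αt i) - n := by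
          rw [Finset.sum_sub_distrib]; simp
        rw [hsub, hβdef]; ring
      show |(L p).det| • g (Φ p) = φ x * ψ s
      rw [hdet, abs_of_pos (pow_pos hc n), hg, hΦ]
      simp only
      rw [hprod, hlast, Complex.real_smul, Complex.ofReal_pow, hφ, hψ]
      simp only
      rw [← hcpow]
      ring
    -- integrability and value on U
    have hprodint : IntegrableOn (fun p : ℝ × (Fin n → ℝ) => φ p.1 * ψ p.2) U := by
      rw [hU, IntegrableOn, Measure.volume_eq_prod, ← Measure.prod_restrict]
      exact hφint.mul_prod hψint
    have hprodval : ∫ p in U, φ p.1 * ψ p.2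
        = (∫ x in Set.Ioo (0:ℝ) 1, φ x) * ∫ s in openSimplex n, ψ s := by
      rw [hU, Measure.volume_eq_prod, setIntegral_prod_mul]
    haveI : (volume : Measure (ℝ × (Fin n → ℝ))).IsAddHaarMeasure := by
      rw [Measure.volume_eq_prod]; infer_instance
    have hSint : IntegrableOn g S := by
      rw [← himg,
        integrableOn_image_iff_integrableOn_abs_det_fderiv_smul volume hUmeas hderiv hinj]
      exact hprodint.congr_fun hkey.symm hUmeas
    have hΓαβ : Complex.Gamma (α0 + β) ≠ 0 := by
      refine Complex.Gamma_ne_zero_of_re_pos ?_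
      rw [Complex.add_re]; linarith
    have hΓβ : Complex.Gamma β ≠ 0 := Complex.Gamma_ne_zero_of_re_pos hβre
    have hbeta : Complex.betaIntegral α0 β
        = Complex.Gamma α0 * Complex.Gamma β / Complex.Gamma (α0 + β) := by
      have h := Complex.Gamma_mul_Gamma_eq_betaIntegral hα0re hβre
      rw [eq_div_iff hΓαβ]
      linear_combination (-1 : ℂ) * h
    have hSval : ∫ q in S, g q
        = Complex.betaIntegral α0 β *
          ((∏ i, Complex.Gamma (αt i)) * Complex.Gamma μ /
            Complex.Gamma ((∑ i, αt i) + μ)) := by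
      rw [← himg, integral_image_eq_integral_abs_det_fderiv_smul volume hUmeas hderiv hinj,
        setIntegral_congr_fun hUmeas hkey, hprodval, hφval, hψval]
    -- transfer to the (n+1)-dimensional space
    set e := MeasurableEquiv.piFinSuccAbove (fun _ : Fin (n+1) => ℝ) 0 with he
    have hevp : MeasurePreserving e volume volume :=
      volume_preserving_piFinSuccAbove (fun _ : Fin (n+1) => ℝ) 0
    have heapp : ∀ t : Fin (n+1) → ℝ, e t = (t 0, fun j => t (Fin.succ j)) := fun t => rfl
    have hepre : openSimplex (n+1) = e ⁻¹' S := by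
      ext t
      simp only [openSimplex, Set.mem_setOf_eq, Set.mem_preimage, heapp t, hS,
        Fin.forall_fin_succ, Fin.sum_univ_succ]
      tauto
    have hGg : (fun t : Fin (n+1) → ℝ =>
        (∏ i, (t i : ℂ) ^ (α i - 1)) * ((1 - ∑ i, t i : ℝ) : ℂ) ^ (μ - 1))
        = fun t => g (e t) := by
      funext t
      rw [heapp t, hg]
      simp only [hαt, hα0, Fin.prod_univ_succ, Fin.sum_univ_succ]
      ring
    constructor
    · have h1 : IntegrableOn (g ∘ e) (e ⁻¹' S) volume :=
        (hevp.integrableOn_comp_preimage e.measurableEmbedding).2 hSint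
      rw [hepre, hGg]
      exact h1
    · rw [hGg, hepre, hevp.setIntegral_preimage_emb e.measurableEmbedding g S, hSval, hbeta,
        ← hβdef]
      rw [Fin.prod_univ_succ, Fin.sum_univ_succ]
      simp only [← hαt, ← hα0]
      rw [show (α0 + ∑ i, αt i) + μ = α0 + β from by rw [hβdef]; ring]
      field_simp
      ring

theorem stmt0 (n : ℕ) (hn : 1 ≤ n) (α : Fin n → ℂ) (hα : ∀ i, 0 < (α i).re)
    (μ : ℂ) (hμ : 0 < μ.re) :
    IntegrableOn
      (fun t : Fin n → ℝ =>
        (∏ i, (t i : ℂ) ^ (α i - 1)) * ((1 - ∑ i, t i : ℝ) : ℂ) ^ (μ - 1))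
      (openSimplex n) ∧
    ∫ t in openSimplex n,
        (∏ i, (t i : ℂ) ^ (α i - 1)) * ((1 - ∑ i, t i : ℝ) : ℂ) ^ (μ - 1)
      = (∏ i, Complex.Gamma (α i)) * Complex.Gamma μ /
          Complex.Gamma ((∑ i, α i) + μ) :=
  dirichlet_aux μ hμ n α hα
end
end

section
/- Let n ≥ 1, λ_0 ∈ ℂ, λ = (λ_1,…,λ_n) ∈ ℂⁿ and μ ∈ ℂ with Re λ_0 > 0 and Re(μ − λ_0) > 0. Then for every x ∈ ℂⁿ with |x_i| < 1 for all i, Lauricella's series F_D(λ_0, λ, μ; x) = Σ_{m∈ℕⁿ} [(λ_0)_{|m|} (λ)_m / ((μ)_{|m|} · m!)] x^m converges absolutely and admits the one-dimensional Euler-type integral representation F_D(λ_0, λ, μ; x) = [Γ(μ)/(Γ(λ_0)Γ(μ−λ_0))] · ∫_0^1 t^{λ_0−1} (1−t)^{μ−λ_0−1} ∏_{i=1}^n (1 − t x_i)^{−λ_i} dt, the integral being absolutely convergent. -/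
open MeasureTheory Complex

set_option maxHeartbeats 2000000

noncomputable section

/-- The Pochhammer symbol `(a)ₖ = a(a+1)⋯(a+k-1)`. -/
def poch (a : ℂ) (k : ℕ) : ℂ := ∏ i ∈ Finset.range k, (a + i)




lemma poch_zero (a : ℂ) : poch a 0 = 1 := by simp [poch]

lemma poch_succ (a : ℂ) (k : ℕ) : poch a (k + 1) = poch a k * (a + k) := by
  simp [poch, Finset.prod_range_succ]

/-- Ratio test: `(k+1) * ‖(b)ₖ‖/k! * r^k` is summable for `0 ≤ r < 1`. -/
lemma summable_poch_aux (b : ℂ) {r : ℝ} (hr0 : 0 ≤ r) (hr : r < 1) :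
    Summable (fun k : ℕ => ((k : ℝ) + 1) * (‖poch b k‖ / k.factorial) * r ^ k) := by
  set f : ℕ → ℝ := fun k => ((k : ℝ) + 1) * (‖poch b k‖ / k.factorial) * r ^ k with hf
  have hfnn : ∀ k, 0 ≤ f k := fun k => by positivity
  set l : ℝ := (1 + r) / 2 with hl
  have hrl : r < l := by simp only [hl]; linarith
  have hl1 : l < 1 := by simp only [hl]; linarith
  apply summable_of_ratio_norm_eventually_le hl1
  -- ratio sequence
  have hratio : ∀ k : ℕ, f (k + 1) ≤ (((k : ℝ) + 2) * (‖b‖ + k) / (((k : ℝ) + 1) ^ 2) * r) * f k := by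
    intro k
    have h1 : ‖poch b (k + 1)‖ = ‖poch b k‖ * ‖b + k‖ := by
      rw [poch_succ, norm_mul]
    have h2 : ((k + 1).factorial : ℝ) = ((k : ℝ) + 1) * k.factorial := by
      push_cast [Nat.factorial_succ]; ring
    have hb : ‖b + (k : ℂ)‖ ≤ ‖b‖ + k := by
      simpa using norm_add_le b (k : ℂ)
    have hfac : (0 : ℝ) < k.factorial := by positivity
    simp only [hf]
    push_cast
    rw [h1, h2]
    rw [pow_succ]
    have key : ((k : ℝ) + 1 + 1) * (‖poch b k‖ * ‖b + (k:ℂ)‖ / (((k : ℝ) + 1) * k.factorial))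
        ≤ ((k : ℝ) + 2) * (‖b‖ + k) / (((k : ℝ) + 1) ^ 2) * (((k : ℝ) + 1) * (‖poch b k‖ / k.factorial)) := by
      have hk1 : ((k:ℝ) + 1) ≠ 0 := by positivity
      have hfac' : (k.factorial : ℝ) ≠ 0 := by positivity
      have e1 : ((k : ℝ) + 1 + 1) * (‖poch b k‖ * ‖b + (k:ℂ)‖ / (((k : ℝ) + 1) * k.factorial))
          = (((k:ℝ) + 2) * (‖poch b k‖ * ‖b + (k:ℂ)‖)) / (((k:ℝ) + 1) * k.factorial) := by
        ring
      have e2 : ((k : ℝ) + 2) * (‖b‖ + k) / (((k : ℝ) + 1) ^ 2) * (((k : ℝ) + 1) * (‖poch b k‖ / k.factorial))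
          = (((k:ℝ) + 2) * (‖poch b k‖ * (‖b‖ + (k:ℝ)))) / (((k:ℝ) + 1) * k.factorial) := by
        field_simp
      rw [e1, e2]
      gcongr
    calc ((k:ℝ) + 1 + 1) * (‖poch b k‖ * ‖b + (k:ℂ)‖ / (((k:ℝ) + 1) * ↑(Nat.factorial k))) * (r ^ k * r)
        ≤ (((k:ℝ) + 2) * (‖b‖ + ↑k) / (((k:ℝ) + 1) ^ 2) * (((k:ℝ) + 1) * (‖poch b k‖ / ↑(Nat.factorial k)))) * (r ^ k * r) := by
          exact mul_le_mul_of_nonneg_right key (by positivity)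
      _ = ((k:ℝ) + 2) * (‖b‖ + ↑k) / (((k:ℝ) + 1) ^ 2) * r * (((k:ℝ) + 1) * (‖poch b k‖ / ↑(Nat.factorial k)) * r ^ k) := by ring
  -- the ratio tends to r < l, so it's eventually ≤ l
  have tbase : ∀ c : ℝ, Filter.Tendsto (fun k : ℕ => ((k : ℝ) + c) / ((k : ℝ) + 1))
      Filter.atTop (nhds 1) := by
    intro c
    have t1 : Filter.Tendsto (fun k : ℕ => ((k:ℝ)+1)) Filter.atTop Filter.atTop :=
      Filter.tendsto_atTop_add_const_right _ 1 tendsto_natCast_atTop_atTop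
    have t2 : Filter.Tendsto (fun k : ℕ => (c - 1) / ((k:ℝ)+1)) Filter.atTop (nhds 0) :=
      Filter.Tendsto.div_atTop tendsto_const_nhds t1
    have : (fun k : ℕ => ((k : ℝ) + c) / ((k : ℝ) + 1)) = fun k : ℕ => 1 + (c - 1) / ((k:ℝ)+1) := by
      funext k
      have hk : ((k:ℝ)+1) ≠ 0 := by positivity
      field_simp
      ring
    rw [this]
    simpa using (tendsto_const_nhds (x := (1:ℝ))).add t2
  have htend : Filter.Tendsto (fun k : ℕ => ((k : ℝ) + 2) * (‖b‖ + k) / (((k : ℝ) + 1) ^ 2) * r)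
      Filter.atTop (nhds r) := by
    have h12 : Filter.Tendsto (fun k : ℕ => (((k : ℝ) + 2) / ((k : ℝ) + 1)) * ((‖b‖ + (k:ℝ)) / ((k : ℝ) + 1)))
        Filter.atTop (nhds 1) := by
      have hb' : Filter.Tendsto (fun k : ℕ => ((k:ℝ) + ‖b‖) / ((k : ℝ) + 1)) Filter.atTop (nhds 1) := tbase ‖b‖
      have := (tbase 2).mul hb'
      simp only [one_mul] at this
      convert this using 2 with k
      ring_nf
    have heq : (fun k : ℕ => ((k : ℝ) + 2) * (‖b‖ + k) / (((k : ℝ) + 1) ^ 2) * r)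
        = fun k : ℕ => ((((k : ℝ) + 2) / ((k : ℝ) + 1)) * ((‖b‖ + (k:ℝ)) / ((k : ℝ) + 1))) * r := by
      funext k
      have hk : ((k:ℝ)+1) ≠ 0 := by positivity
      field_simp
    rw [heq]
    simpa using h12.mul_const r
  have hev : ∀ᶠ k : ℕ in Filter.atTop, ((k : ℝ) + 2) * (‖b‖ + k) / (((k : ℝ) + 1) ^ 2) * r ≤ l :=
    htend.eventually_le_const hrl
  filter_upwards [hev] with k hk
  rw [Real.norm_of_nonneg (hfnn _), Real.norm_of_nonneg (hfnn _)]
  calc f (k + 1) ≤ (((k : ℝ) + 2) * (‖b‖ + k) / (((k : ℝ) + 1) ^ 2) * r) * f k := hratio k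
    _ ≤ l * f k := mul_le_mul_of_nonneg_right hk (hfnn k)

lemma summable_poch_geom (b : ℂ) {r : ℝ} (hr0 : 0 ≤ r) (hr : r < 1) :
    Summable (fun k : ℕ => ‖poch b k‖ / k.factorial * r ^ k) := by
  apply (summable_poch_aux b hr0 hr).of_nonneg_of_le (fun k => by positivity)
  intro k
  have h1 : (1:ℝ) ≤ (k:ℝ) + 1 := by
    have : (0:ℝ) ≤ (k:ℝ) := Nat.cast_nonneg k
    linarith
  calc ‖poch b k‖ / k.factorial * r ^ k = 1 * (‖poch b k‖ / k.factorial) * r ^ k := by ring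
    _ ≤ ((k:ℝ)+1) * (‖poch b k‖ / k.factorial) * r ^ k := by
        apply mul_le_mul_of_nonneg_right _ (by positivity)
        apply mul_le_mul_of_nonneg_right h1 (by positivity)







lemma norm_poch_div_fact (a : ℂ) (k : ℕ) :
    ‖poch a k / (k.factorial : ℂ)‖ = ‖poch a k‖ / k.factorial := by
  rw [norm_div, Complex.norm_natCast]

/-- Norm-summability of the binomial series. -/
lemma summable_norm_binomial (a z : ℂ) (hz : ‖z‖ < 1) :
    Summable (fun k : ℕ => ‖poch a k / k.factorial * z ^ k‖) := by
  have := summable_poch_geom a (norm_nonneg z) hz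
  apply Summable.congr this
  intro k
  rw [norm_mul, norm_poch_div_fact, norm_pow]

/-- The complex binomial series: `(1-z)^(-a) = ∑ (a)ₖ/k! zᵏ` for `‖z‖ < 1`. -/
lemma hasSum_binomial (a z : ℂ) (hz : ‖z‖ < 1) :
    HasSum (fun k : ℕ => poch a k / k.factorial * z ^ k) ((1 - z) ^ (-a)) := by
  set r : ℝ := (1 + ‖z‖) / 2 with hrdef
  have hr0 : 0 ≤ r := by positivity
  have hzr : ‖z‖ < r := by simp only [hrdef]; linarith
  have hr1 : r < 1 := by simp only [hrdef]; linarith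
  set c : ℕ → ℂ := fun k => poch a k / k.factorial with hc
  set g : ℕ → ℂ → ℂ := fun k w => c k * w ^ k with hg
  set g' : ℕ → ℂ → ℂ := fun k w => c k * (k * w ^ (k - 1)) with hg'
  set t : Set ℂ := Metric.ball 0 r with ht
  have htopen : IsOpen t := Metric.isOpen_ball
  have htconv : Convex ℝ t := convex_ball 0 r
  have htpre : IsPreconnected t := htconv.isPreconnected
  have hrpos : 0 < r := by positivity
  have hmem : ∀ w ∈ t, ‖w‖ < r := by
    intro w hw; rw [ht, Metric.mem_ball, dist_zero_right] at hw; exact hw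
  have hzt : z ∈ t := by rw [ht, Metric.mem_ball, dist_zero_right]; exact hzr
  have h0t : (0 : ℂ) ∈ t := by rw [ht, Metric.mem_ball, dist_self]; exact hrpos
  -- the uniform derivative bound
  set u : ℕ → ℝ := fun k => (1 / r) * (((k : ℝ) + 1) * (‖poch a k‖ / k.factorial) * r ^ k) with hu
  have husum : Summable u := (summable_poch_aux a hr0 hr1).mul_left _
  have hderiv : ∀ k : ℕ, ∀ w : ℂ, HasDerivAt (g k) (g' k w) w := by
    intro k w
    simpa [hg, hg', mul_comm, mul_assoc, mul_left_comm] using (hasDerivAt_pow k w).const_mul (c k)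
  have hbound : ∀ (k : ℕ), ∀ w ∈ t, ‖g' k w‖ ≤ u k := by
    intro k w hw
    have hwr := hmem w hw
    have hunn : 0 ≤ u k := by simp only [hu]; positivity
    rcases k with _ | j
    · simpa [hg'] using hunn
    · have h1 : ‖g' (j+1) w‖ = ‖c (j+1)‖ * (((j:ℝ) + 1) * ‖w‖ ^ j) := by
        rw [show g' (j+1) w = c (j+1) * ((((j:ℕ)+1:ℕ):ℂ) * w ^ j) from rfl,
          norm_mul, norm_mul, Complex.norm_natCast, norm_pow]
        push_cast
        ring
      rw [h1, norm_poch_div_fact]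
      have h2 : ‖w‖ ^ j ≤ r ^ j := pow_le_pow_left₀ (norm_nonneg w) hwr.le _
      have h3 : r ^ j = r ^ (j+1) / r := by
        rw [pow_succ, mul_div_assoc, div_self hrpos.ne', mul_one]
      calc ‖poch a (j+1)‖ / (j+1).factorial * (((j:ℝ)+1) * ‖w‖ ^ j)
          ≤ ‖poch a (j+1)‖ / (j+1).factorial * ((((j:ℕ)+1:ℕ):ℝ) + 1) * (r ^ (j+1) / r) := by
            rw [mul_assoc]
            apply mul_le_mul_of_nonneg_left _ (by positivity)
            apply mul_le_mul _ (h2.trans_eq h3) (by positivity) (by positivity)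
            push_cast
            linarith
        _ = u (j+1) := by
            simp only [hu]
            push_cast
            field_simp
  have hsum0 : Summable fun k => g k 0 := by
    apply summable_of_ne_finset_zero (s := {0})
    intro k hk
    have : k ≠ 0 := by simpa using hk
    simp [hg, zero_pow this]
  -- the sum function and its derivative
  set F : ℂ → ℂ := fun w => ∑' k, g k w with hF
  have hFderiv : ∀ w ∈ t, HasDerivAt F (∑' k, g' k w) w := by
    intro w hw
    exact hasDerivAt_tsum_of_isPreconnected husum htopen htpre
      (fun k y hy => hderiv k y) hbound h0t hsum0 hw
  have hFsummable : ∀ w ∈ t, Summable fun k => g k w := by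
    intro w hw
    exact summable_of_summable_hasDerivAt_of_isPreconnected husum htopen htpre
      (fun k y hy => hderiv k y) hbound h0t hsum0 hw
  -- summability helpers at a point of t
  have key_sum : ∀ w ∈ t, ∀ (p : ℕ → ℂ), (∀ k, ‖p k‖ ≤ (‖a‖ + 1) * ((k:ℝ)+1)) →
      Summable (fun k => c k * p k * w ^ k) := by
    intro w hw p hp
    have hwr := hmem w hw
    have hw1 : ‖w‖ < 1 := lt_trans hwr hr1
    apply Summable.of_norm_bounded (g := fun k : ℕ => (‖a‖ + 1) * (((k:ℝ)+1) * (‖poch a k‖ / k.factorial) * ‖w‖ ^ k))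
      ((summable_poch_aux a (norm_nonneg w) hw1).mul_left _)
    intro k
    rw [norm_mul, norm_mul, norm_poch_div_fact, norm_pow]
    have : ‖poch a k‖ / k.factorial * ‖p k‖ ≤ ‖poch a k‖ / k.factorial * ((‖a‖ + 1) * ((k:ℝ)+1)) :=
      mul_le_mul_of_nonneg_left (hp k) (by positivity)
    calc ‖poch a k‖ / ↑k.factorial * ‖p k‖ * ‖w‖ ^ k
        ≤ ‖poch a k‖ / k.factorial * ((‖a‖ + 1) * ((k:ℝ)+1)) * ‖w‖ ^ k :=
          mul_le_mul_of_nonneg_right this (by positivity)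
      _ = (‖a‖ + 1) * (((k:ℝ)+1) * (‖poch a k‖ / k.factorial) * ‖w‖ ^ k) := by ring
  -- the ODE : (1 - w) * F'(w) = a * F(w) on t
  have hODE : ∀ w ∈ t, (1 - w) * (∑' k, g' k w) = a * F w := by
    intro w hw
    have hpa : ∀ k : ℕ, ‖a + (k:ℂ)‖ ≤ (‖a‖ + 1) * ((k:ℝ)+1) := by
      intro k
      calc ‖a + (k:ℂ)‖ ≤ ‖a‖ + k := by simpa using norm_add_le a (k:ℂ)
        _ ≤ (‖a‖ + 1) * ((k:ℝ)+1) := by nlinarith [norm_nonneg a, Nat.cast_nonneg (α := ℝ) k]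
    have hS1 : Summable (fun k => c k * (a + k) * w ^ k) :=
      key_sum w hw _ hpa
    have hS2 : Summable (fun k => c k * (k:ℂ) * w ^ k) := by
      apply key_sum w hw
      intro k
      rw [Complex.norm_natCast]
      nlinarith [norm_nonneg a, Nat.cast_nonneg (α := ℝ) k]
    have hS3 : Summable (fun k => c k * (a:ℂ) * w ^ k) := by
      apply key_sum w hw
      intro k
      nlinarith [norm_nonneg a, Nat.cast_nonneg (α := ℝ) k]
    -- c (k+1) * (k+1) = c k * (a + k)
    have hcrec : ∀ k : ℕ, c (k + 1) * ((k:ℂ) + 1) = c k * (a + k) := by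
      intro k
      simp only [hc, poch_succ]
      have hfac : ((k+1).factorial : ℂ) = ((k:ℂ) + 1) * (k.factorial : ℂ) := by
        push_cast [Nat.factorial_succ]; ring
      rw [hfac]
      have h1 : ((k:ℂ) + 1) ≠ 0 := Nat.cast_add_one_ne_zero k
      have h2 : ((k.factorial : ℂ)) ≠ 0 := by
        exact_mod_cast Nat.cast_ne_zero.mpr k.factorial_ne_zero
      field_simp
    -- identify the derivative series
    have hD : (∑' k, g' k w) = ∑' k, c k * (a + k) * w ^ k := by
      have hsg' : Summable (fun k => g' k w) := by
        apply Summable.of_norm_bounded husum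
        intro k; exact hbound k w hw
      rw [Summable.tsum_eq_zero_add hsg']
      have hzero : g' 0 w = 0 := by simp [hg']
      rw [hzero, zero_add]
      have heach : ∀ k : ℕ, g' (k + 1) w = c k * (a + k) * w ^ k := by
        intro k
        simp only [hg', Nat.add_sub_cancel]
        push_cast
        linear_combination (w ^ k) * hcrec k
      exact tsum_congr heach
    have hshift : (∑' k, c k * (k:ℂ) * w ^ k) = ∑' k, c k * (a + k) * w ^ (k+1) := by
      rw [Summable.tsum_eq_zero_add hS2]
      simp only [Nat.cast_zero, mul_zero, zero_mul, zero_add]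
      apply tsum_congr
      intro k
      push_cast
      linear_combination (w ^ (k+1)) * hcrec k
    have hwT : w * (∑' k, c k * (a + k) * w ^ k) = ∑' k, c k * (a + k) * w ^ (k+1) := by
      rw [← tsum_mul_left]
      apply tsum_congr
      intro k
      ring
    have hsplitT : (∑' k, c k * (a + k) * w ^ k)
        = (∑' k, c k * a * w ^ k) + ∑' k, c k * (k:ℂ) * w ^ k := by
      rw [← Summable.tsum_add hS3 hS2]
      apply tsum_congr
      intro k
      ring
    have haF : a * F w = ∑' k, c k * a * w ^ k := by
      simp only [hF, hg]
      rw [← tsum_mul_left]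
      apply tsum_congr
      intro k
      ring
    rw [hD, sub_mul, one_mul, hwT, ← hshift, hsplitT, haF]
    ring
  -- the function H := F * (1 - ·)^a has zero derivative on t
  have h1w : ∀ w ∈ t, (1 : ℂ) - w ≠ 0 := by
    intro w hw
    have := hmem w hw
    intro h
    have : ‖(1:ℂ)‖ ≤ ‖w‖ := by
      have : (1:ℂ) = w := by linear_combination h
      simp [this]
    simp only [norm_one] at this
    linarith [lt_trans (hmem w hw) hr1]
  have hslit : ∀ w ∈ t, (1 : ℂ) - w ∈ Complex.slitPlane := by
    intro w hw
    apply Or.inl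
    have h1 : w.re ≤ ‖w‖ := by
      calc w.re ≤ |w.re| := le_abs_self _
        _ ≤ ‖w‖ := Complex.abs_re_le_norm w
    have h2 : ‖w‖ < 1 := lt_trans (hmem w hw) hr1
    simp only [Complex.sub_re, Complex.one_re]
    linarith
  set H : ℂ → ℂ := fun w => F w * (1 - w) ^ a with hH
  have hHderiv : ∀ w ∈ t, HasDerivAt H 0 w := by
    intro w hw
    have hbase : HasDerivAt (fun w : ℂ => 1 - w) (-1) w := by
      simpa using (hasDerivAt_id w).const_sub 1
    have hcp : HasDerivAt (fun w : ℂ => (1 - w) ^ a) (a * (1 - w) ^ (a - 1) * (-1)) w :=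
      hbase.cpow_const (hslit w hw)
    have hmul := (hFderiv w hw).mul hcp
    have hval : (∑' k, g' k w) * (1 - w) ^ a + F w * (a * (1 - w) ^ (a - 1) * (-1)) = 0 := by
      have hsplit : (1 - w) ^ a = (1 - w) ^ (a - 1) * (1 - w) := by
        conv_lhs => rw [show a = (a - 1) + 1 by ring]
        rw [cpow_add _ _ (h1w w hw), cpow_one]
      rw [hsplit]
      linear_combination ((1 - w) ^ (a - 1)) * (hODE w hw)
    rw [← hval]
    exact hmul
  -- H is constant on t
  have hdiff : DifferentiableOn ℂ H t := fun w hw =>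
    ((hHderiv w hw).differentiableAt).differentiableWithinAt
  have hfz : ∀ w ∈ t, fderivWithin ℂ H t w = 0 := by
    intro w hw
    have hF0 : HasFDerivAt H (0 : ℂ →L[ℂ] ℂ) w := by
      have h := (hHderiv w hw).hasFDerivAt
      rwa [ContinuousLinearMap.toSpanSingleton_zero] at h
    exact (hF0.hasFDerivWithinAt).fderivWithin (htopen.uniqueDiffWithinAt hw)
  have hconst : H z = H 0 := htconv.is_const_of_fderivWithin_eq_zero hdiff hfz hzt h0t
  have hF0val : F 0 = 1 := by
    simp only [hF]
    rw [tsum_eq_single 0]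
    · simp [hg, hc, poch_zero]
    · intro k hk
      simp [hg, zero_pow hk]
  have hH0 : H 0 = 1 := by
    simp only [hH, hF0val, sub_zero, Complex.one_cpow, one_mul]
  have hkey : F z * (1 - z) ^ a = 1 := hconst.trans hH0
  have hne : (1 - z) ^ a ≠ 0 := by
    rw [Complex.cpow_def_of_ne_zero (h1w z hzt)]
    exact Complex.exp_ne_zero _
  have hFz : F z = (1 - z) ^ (-a) := by
    rw [Complex.cpow_neg]
    exact eq_inv_of_mul_eq_one_left hkey
  have := (hFsummable z hzt).hasSum
  rw [show (∑' k, g k z) = F z from rfl, hFz] at this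
  exact this


/-- Summability of a product over a pi type, norms version. -/
lemma pi_summable_norm : ∀ (n : ℕ) (g : Fin n → ℕ → ℂ),
    (∀ i, Summable fun k => ‖g i k‖) →
    Summable (fun m : Fin n → ℕ => ∏ i, ‖g i (m i)‖) := by
  intro n
  induction n with
  | zero =>
    intro g hg
    apply summable_of_finite_support
    apply Set.Finite.subset (Set.finite_singleton (fun i => 0))
    intro m _
    simp [Subsingleton.elim m (fun i => 0)]
  | succ n ih =>
    intro g hg
    set e := Fin.consEquiv (fun _ : Fin (n + 1) => ℕ) with he
    rw [← e.summable_iff]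
    have hcomp : ((fun m : Fin (n+1) → ℕ => ∏ i, ‖g i (m i)‖) ∘ e)
        = fun p : ℕ × (Fin n → ℕ) => ‖g 0 p.1‖ * ∏ i : Fin n, ‖g i.succ (p.2 i)‖ := by
      funext p
      simp only [Function.comp_apply, he, Fin.consEquiv_apply]
      rw [Fin.prod_univ_succ]
      simp [Fin.cons_zero, Fin.cons_succ]
    rw [hcomp]
    apply Summable.mul_of_nonneg (hg 0) (ih (fun i => g i.succ) (fun i => hg i.succ))
    · intro k; positivity
    · intro m; exact Finset.prod_nonneg fun i _ => norm_nonneg _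

/-- HasSum of a product over a pi type. -/
lemma pi_hasSum : ∀ (n : ℕ) (g : Fin n → ℕ → ℂ) (A : Fin n → ℂ),
    (∀ i, HasSum (g i) (A i)) → (∀ i, Summable fun k => ‖g i k‖) →
    HasSum (fun m : Fin n → ℕ => ∏ i, g i (m i)) (∏ i, A i) := by
  intro n
  induction n with
  | zero =>
    intro g A h hn
    have : ∀ m : Fin 0 → ℕ, m ≠ (fun i => 0) → (∏ i, g i (m i)) = 0 := by
      intro m hm
      exact absurd (Subsingleton.elim m _) hm
    simpa using hasSum_single (f := fun m : Fin 0 → ℕ => ∏ i, g i (m i)) (fun i => 0) this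
  | succ n ih =>
    intro g A h hn
    set e := Fin.consEquiv (fun _ : Fin (n + 1) => ℕ) with he
    rw [← Equiv.hasSum_iff e]
    have hcomp : ((fun m : Fin (n+1) → ℕ => ∏ i, g i (m i)) ∘ e)
        = fun p : ℕ × (Fin n → ℕ) => g 0 p.1 * ∏ i : Fin n, g i.succ (p.2 i) := by
      funext p
      simp only [Function.comp_apply, he, Fin.consEquiv_apply]
      rw [Fin.prod_univ_succ]
      simp [Fin.cons_zero, Fin.cons_succ]
    rw [hcomp]
    have htail : HasSum (fun m : Fin n → ℕ => ∏ i, g i.succ (m i)) (∏ i : Fin n, A i.succ) :=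
      ih (fun i => g i.succ) (fun i => A i.succ) (fun i => h i.succ) (fun i => hn i.succ)
    have hnorm_tail : Summable fun m : Fin n → ℕ => ‖∏ i, g i.succ (m i)‖ := by
      refine (pi_summable_norm n (fun i => g i.succ) (fun i => hn i.succ)).congr fun m => ?_
      rw [norm_prod]
    have hsummable : Summable fun p : ℕ × (Fin n → ℕ) => g 0 p.1 * ∏ i : Fin n, g i.succ (p.2 i) := by
      apply summable_mul_of_summable_norm (hn 0) hnorm_tail
    have htsum : (∑' p : ℕ × (Fin n → ℕ), g 0 p.1 * ∏ i : Fin n, g i.succ (p.2 i))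
        = (∑' k, g 0 k) * ∑' m : Fin n → ℕ, ∏ i, g i.succ (m i) :=
      by rw [← tsum_mul_tsum_of_summable_norm (hn 0) hnorm_tail]
    rw [hsummable.hasSum_iff, htsum, (h 0).tsum_eq, htail.tsum_eq, Fin.prod_univ_succ]





lemma add_nat_ne_zero {a : ℂ} (ha : 0 < a.re) (k : ℕ) : a + (k : ℂ) ≠ 0 := by
  intro h
  have : (a + (k : ℂ)).re = 0 := by rw [h]; simp
  rw [Complex.add_re, Complex.natCast_re] at this
  have : (0:ℝ) ≤ (k:ℝ) := Nat.cast_nonneg k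
  linarith [this]

lemma poch_ne_zero {a : ℂ} (ha : 0 < a.re) (k : ℕ) : poch a k ≠ 0 := by
  induction k with
  | zero => simp [poch_zero]
  | succ j ih =>
    rw [poch_succ]
    exact mul_ne_zero ih (add_nat_ne_zero ha j)

lemma Gamma_poch {a : ℂ} (ha : 0 < a.re) (k : ℕ) :
    Complex.Gamma (a + k) = Complex.Gamma a * poch a k := by
  induction k with
  | zero => simp [poch_zero]
  | succ j ih =>
    have h1 : a + ((j:ℕ)+1 : ℕ) = (a + j) + 1 := by push_cast; ring
    rw [h1, Complex.Gamma_add_one _ (add_nat_ne_zero ha j), ih, poch_succ]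
    ring

/-- The Pochhammer ratio as a Beta integral. -/
lemma poch_ratio_beta {lam0 μ : ℂ} (hlam0 : 0 < lam0.re) (hμ : 0 < (μ - lam0).re) (S : ℕ) :
    poch lam0 S / poch μ S
      = Complex.Gamma μ / (Complex.Gamma lam0 * Complex.Gamma (μ - lam0)) *
        Complex.betaIntegral (lam0 + S) (μ - lam0) := by
  have hμre : 0 < μ.re := by
    have := Complex.sub_re μ lam0
    have h2 : (μ - lam0).re = μ.re - lam0.re := this
    linarith [hμ, hlam0, h2 ▸ hμ]
  have hS : 0 < (lam0 + S).re := by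
    rw [Complex.add_re, Complex.natCast_re]
    have : (0:ℝ) ≤ (S:ℝ) := Nat.cast_nonneg S
    linarith
  have hbeta := Complex.Gamma_mul_Gamma_eq_betaIntegral hS hμ
  have hsum : lam0 + S + (μ - lam0) = μ + S := by ring
  rw [hsum] at hbeta
  have h1 : Complex.Gamma (lam0 + S) = Complex.Gamma lam0 * poch lam0 S := Gamma_poch hlam0 S
  have h2 : Complex.Gamma (μ + S) = Complex.Gamma μ * poch μ S := Gamma_poch hμre S
  rw [h1, h2] at hbeta
  have hG1 : Complex.Gamma lam0 ≠ 0 := Complex.Gamma_ne_zero_of_re_pos hlam0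
  have hG2 : Complex.Gamma (μ - lam0) ≠ 0 := Complex.Gamma_ne_zero_of_re_pos hμ
  have hG3 : Complex.Gamma μ ≠ 0 := Complex.Gamma_ne_zero_of_re_pos hμre
  have hp : poch μ S ≠ 0 := poch_ne_zero hμre S
  field_simp
  linear_combination hbeta



lemma norm_cpow_real_pos {t : ℝ} (ht : 0 < t) (w : ℂ) : ‖(t:ℂ) ^ w‖ = t ^ w.re := by
  rw [Complex.norm_cpow_eq_rpow_re_of_pos ht]

lemma beta_integrableOn {u v : ℂ} (hu : 0 < u.re) (hv : 0 < v.re) :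
    IntegrableOn (fun t : ℝ => (t:ℂ) ^ (u-1) * ((1:ℂ) - t) ^ (v-1)) (Set.Ioo (0:ℝ) 1) := by
  have h := Complex.betaIntegral_convergent hu hv
  rw [intervalIntegrable_iff_integrableOn_Ioc_of_le (by norm_num : (0:ℝ) ≤ 1)] at h
  exact h.mono_set Set.Ioo_subset_Ioc_self

lemma betaIntegral_eq_Ioo (u v : ℂ) :
    Complex.betaIntegral u v = ∫ t in Set.Ioo (0:ℝ) 1, (t:ℂ) ^ (u-1) * ((1:ℂ) - t) ^ (v-1) := by
  rw [Complex.betaIntegral, intervalIntegral.integral_of_le (by norm_num : (0:ℝ) ≤ 1),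
    MeasureTheory.integral_Ioc_eq_integral_Ioo]

lemma norm_beta_integrand {t : ℝ} (ht : t ∈ Set.Ioo (0:ℝ) 1) (u v : ℂ) :
    ‖(t:ℂ) ^ (u-1) * ((1:ℂ) - t) ^ (v-1)‖ = t ^ (u.re - 1) * (1 - t) ^ (v.re - 1) := by
  obtain ⟨ht0, ht1⟩ := ht
  have h1t : (0:ℝ) < 1 - t := by linarith
  have hc : ((1:ℂ) - (t:ℝ)) = ((1 - t : ℝ) : ℂ) := by push_cast; ring
  rw [norm_mul, norm_cpow_real_pos ht0, hc, norm_cpow_real_pos h1t]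
  simp [Complex.sub_re, Complex.one_re]

lemma rbeta_integrableOn {p q : ℝ} (hp : 0 < p) (hq : 0 < q) :
    IntegrableOn (fun t : ℝ => t ^ (p-1) * (1-t) ^ (q-1)) (Set.Ioo (0:ℝ) 1) := by
  have h : IntegrableOn (fun t : ℝ => ‖(t:ℂ) ^ ((p:ℂ)-1) * ((1:ℂ) - t) ^ ((q:ℂ)-1)‖) (Set.Ioo (0:ℝ) 1) :=
    (beta_integrableOn (u := (p:ℂ)) (v := (q:ℂ)) (by simpa using hp) (by simpa using hq)).norm
  refine MeasureTheory.IntegrableOn.congr_fun h (fun t ht => ?_) measurableSet_Ioo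
  rw [norm_beta_integrand ht]
  simp

/-- the real Beta value -/
def rbeta (p q : ℝ) : ℝ := ∫ t in Set.Ioo (0:ℝ) 1, t ^ (p-1) * (1-t) ^ (q-1)

lemma rbeta_nonneg (p q : ℝ) : 0 ≤ rbeta p q := by
  apply MeasureTheory.setIntegral_nonneg measurableSet_Ioo
  intro t ht
  have h0 := ht.1
  have h1 : (0:ℝ) < 1 - t := by linarith [ht.2]
  positivity

/-- uniform bound on the shifted Beta integrals -/
lemma norm_betaIntegral_le {u v : ℂ} (hu : 0 < u.re) (hv : 0 < v.re) (S : ℕ) :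
    ‖Complex.betaIntegral (u + S) v‖ ≤ rbeta u.re v.re := by
  rw [betaIntegral_eq_Ioo]
  refine (MeasureTheory.norm_integral_le_integral_norm _).trans ?_
  rw [rbeta]
  have huS : 0 < (u + (S:ℂ)).re := by
    rw [Complex.add_re, Complex.natCast_re]
    have : (0:ℝ) ≤ (S:ℝ) := Nat.cast_nonneg S
    linarith
  have hint1 : IntegrableOn (fun t : ℝ => ‖(t:ℂ) ^ (u + S - 1) * ((1:ℂ) - t) ^ (v-1)‖)
      (Set.Ioo (0:ℝ) 1) := (beta_integrableOn huS hv).norm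
  apply MeasureTheory.setIntegral_mono_on hint1 (rbeta_integrableOn hu hv) measurableSet_Ioo
  intro t ht
  rw [norm_beta_integrand ht]
  obtain ⟨ht0, ht1⟩ := ht
  have h1t : (0:ℝ) < 1 - t := by linarith
  apply mul_le_mul_of_nonneg_right _ (Real.rpow_nonneg h1t.le _)
  have he : (u + (S:ℂ)).re - 1 = (u.re - 1) + S := by
    rw [Complex.add_re, Complex.natCast_re]; ring
  rw [he, Real.rpow_add ht0, Real.rpow_natCast]
  have hpow : t ^ S ≤ 1 := pow_le_one₀ ht0.le ht1.le
  nlinarith [Real.rpow_nonneg ht0.le (u.re - 1), Real.rpow_pos_of_pos ht0 (u.re - 1)]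

lemma beta_integrand_le {t : ℝ} (ht : t ∈ Set.Ioo (0:ℝ) 1) (u v : ℂ) (S : ℕ) :
    ‖(t:ℂ) ^ (u + S - 1) * ((1:ℂ) - t) ^ (v-1)‖ ≤ t ^ (u.re - 1) * (1-t) ^ (v.re - 1) := by
  rw [norm_beta_integrand ht]
  obtain ⟨ht0, ht1⟩ := ht
  have h1t : (0:ℝ) < 1 - t := by linarith
  apply mul_le_mul_of_nonneg_right _ (Real.rpow_nonneg h1t.le _)
  have he : (u + (S:ℂ)).re - 1 = (u.re - 1) + S := by
    rw [Complex.add_re, Complex.natCast_re]; ring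
  rw [he, Real.rpow_add ht0, Real.rpow_natCast]
  have hpow : t ^ S ≤ 1 := pow_le_one₀ ht0.le ht1.le
  nlinarith [Real.rpow_nonneg ht0.le (u.re - 1), Real.rpow_pos_of_pos ht0 (u.re - 1)]
theorem stmt7 (n : ℕ) (hn : 1 ≤ n) (lam0 : ℂ) (lam : Fin n → ℂ) (μ : ℂ)
    (hlam0 : 0 < lam0.re) (hμ : 0 < (μ - lam0).re)
    (x : Fin n → ℂ) (hx : ∀ i, ‖x i‖ < 1) :
    Summable (fun m : Fin n → ℕ =>
      ‖poch lam0 (∑ i, m i) * (∏ i, poch (lam i) (m i)) /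
          (poch μ (∑ i, m i) * ∏ i, (Nat.factorial (m i) : ℂ)) *
          ∏ i, x i ^ m i‖) ∧
    IntegrableOn
      (fun t : ℝ =>
        (t : ℂ) ^ (lam0 - 1) * ((1 - t : ℝ) : ℂ) ^ (μ - lam0 - 1) *
          ∏ i, (1 - (t : ℂ) * x i) ^ (-lam i))
      (Set.Ioo 0 1) ∧
    (∑' m : Fin n → ℕ,
        poch lam0 (∑ i, m i) * (∏ i, poch (lam i) (m i)) /
          (poch μ (∑ i, m i) * ∏ i, (Nat.factorial (m i) : ℂ)) *
          ∏ i, x i ^ m i)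
      = Complex.Gamma μ / (Complex.Gamma lam0 * Complex.Gamma (μ - lam0)) *
          ∫ t in Set.Ioo (0 : ℝ) 1,
            (t : ℂ) ^ (lam0 - 1) * ((1 - t : ℝ) : ℂ) ^ (μ - lam0 - 1) *
              ∏ i, (1 - (t : ℂ) * x i) ^ (-lam i) := by
  have hμre : 0 < μ.re := by
    have h := Complex.sub_re μ lam0
    linarith [hμ, h ▸ hμ]
  set G : ℂ := Complex.Gamma μ / (Complex.Gamma lam0 * Complex.Gamma (μ - lam0)) with hG
  set g : Fin n → ℕ → ℂ := fun i k => poch (lam i) k / k.factorial * (x i) ^ k with hgdef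
  have hgnorm : ∀ i, Summable fun k => ‖g i k‖ := fun i => summable_norm_binomial _ _ (hx i)
  have hPi : Summable (fun m : Fin n → ℕ => ∏ i, ‖g i (m i)‖) := pi_summable_norm n g hgnorm
  set K : ℝ := ‖G‖ * rbeta lam0.re (μ - lam0).re with hK
  have hratio_bound : ∀ S : ℕ, ‖poch lam0 S / poch μ S‖ ≤ K := by
    intro S
    rw [poch_ratio_beta hlam0 hμ S, norm_mul]
    exact mul_le_mul_of_nonneg_left (norm_betaIntegral_le hlam0 hμ S) (norm_nonneg G)
  have hfact_ne : ∀ m : Fin n → ℕ, (∏ i, ((m i).factorial : ℂ)) ≠ 0 := fun m =>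
    Finset.prod_ne_zero_iff.mpr fun i _ => Nat.cast_ne_zero.mpr (Nat.factorial_ne_zero _)
  set T : (Fin n → ℕ) → ℂ := fun m =>
    poch lam0 (∑ i, m i) * (∏ i, poch (lam i) (m i)) /
      (poch μ (∑ i, m i) * ∏ i, (Nat.factorial (m i) : ℂ)) * ∏ i, x i ^ m i with hT
  have hprodg : ∀ m : Fin n → ℕ, (∏ i, g i (m i))
      = (∏ i, poch (lam i) (m i)) / (∏ i, ((m i).factorial : ℂ)) * ∏ i, x i ^ m i := by
    intro m
    simp only [hgdef]
    rw [Finset.prod_mul_distrib, Finset.prod_div_distrib]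
  have hterm : ∀ m, T m = (poch lam0 (∑ i, m i) / poch μ (∑ i, m i)) * ∏ i, g i (m i) := by
    intro m
    rw [hprodg m, hT]
    have h1 := poch_ne_zero hμre (∑ i, m i)
    have h2 := hfact_ne m
    field_simp
  -- Goal 1 : summability
  have goal1 : Summable (fun m : Fin n → ℕ => ‖T m‖) := by
    apply Summable.of_nonneg_of_le (fun m => norm_nonneg _) _ (hPi.mul_left K)
    intro m
    rw [hterm m, norm_mul, norm_prod]
    exact mul_le_mul_of_nonneg_right (hratio_bound _)
      (Finset.prod_nonneg fun i _ => norm_nonneg _)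
  -- continuity / slit-plane facts for the product factor
  have hbase : ∀ (i : Fin n), ∀ t ∈ Set.Icc (0:ℝ) 1, (0:ℝ) < ((1:ℂ) - (t:ℂ) * x i).re := by
    intro i t ht
    have h1 : ((1:ℂ) - (t:ℂ) * x i).re = 1 - t * (x i).re := by
      simp [Complex.sub_re, Complex.one_re, Complex.mul_re, Complex.ofReal_re, Complex.ofReal_im]
    rw [h1]
    have h2 : |(x i).re| ≤ ‖x i‖ := Complex.abs_re_le_norm (x i)
    have h3 : (x i).re ≤ ‖x i‖ := le_trans (le_abs_self _) h2
    have h4 : t * (x i).re ≤ t * ‖x i‖ := mul_le_mul_of_nonneg_left h3 ht.1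
    have h5 : t * ‖x i‖ ≤ ‖x i‖ := by
      nlinarith [ht.2, norm_nonneg (x i)]
    linarith [hx i]
  have hP_cont : ContinuousOn (fun t : ℝ => ∏ i, ((1:ℂ) - (t:ℂ) * x i) ^ (-lam i))
      (Set.Icc (0:ℝ) 1) := by
    apply continuousOn_finset_prod
    intro i _
    apply ContinuousOn.cpow_const
    · exact (continuous_const.sub (Complex.continuous_ofReal.mul continuous_const)).continuousOn
    · intro t ht
      exact Or.inl (hbase i t ht)
  obtain ⟨C, hC⟩ := isCompact_Icc.exists_bound_of_continuousOn hP_cont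
  have hw_eq : (fun t : ℝ => (t:ℂ) ^ (lam0 - 1) * ((1 - t : ℝ) : ℂ) ^ (μ - lam0 - 1))
      = fun t : ℝ => (t:ℂ) ^ (lam0 - 1) * ((1:ℂ) - (t:ℂ)) ^ (μ - lam0 - 1) := by
    funext t
    rw [Complex.ofReal_sub, Complex.ofReal_one]
  have hw_int : IntegrableOn
      (fun t : ℝ => (t:ℂ) ^ (lam0 - 1) * ((1 - t : ℝ) : ℂ) ^ (μ - lam0 - 1))
      (Set.Ioo (0:ℝ) 1) := by
    rw [hw_eq]
    exact beta_integrableOn hlam0 hμ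
  have hmeasP : AEStronglyMeasurable (fun t : ℝ => ∏ i, ((1:ℂ) - (t:ℂ) * x i) ^ (-lam i))
      (volume.restrict (Set.Ioo (0:ℝ) 1)) :=
    (hP_cont.mono Set.Ioo_subset_Icc_self).aestronglyMeasurable measurableSet_Ioo
  -- Goal 2 : integrability
  have goal2 : IntegrableOn
      (fun t : ℝ => (t:ℂ) ^ (lam0 - 1) * ((1 - t : ℝ) : ℂ) ^ (μ - lam0 - 1) *
        ∏ i, (1 - (t:ℂ) * x i) ^ (-lam i)) (Set.Ioo (0:ℝ) 1) := by
    have h := hw_int.bdd_mul (c := C) hmeasP ?_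
    · apply h.congr
      apply Filter.Eventually.of_forall
      intro t
      simp [mul_comm]
    · rw [MeasureTheory.ae_restrict_iff' measurableSet_Ioo]
      exact MeasureTheory.ae_of_all _ fun t ht => hC t (Set.Ioo_subset_Icc_self ht)
  -- termwise integrand
  set fm : (Fin n → ℕ) → ℝ → ℂ := fun m t =>
    (t:ℂ) ^ (lam0 - 1) * ((1 - t : ℝ) : ℂ) ^ (μ - lam0 - 1) *
      ∏ i, (poch (lam i) (m i) / ((m i).factorial : ℂ) * ((t:ℂ) * x i) ^ (m i)) with hfm
  have hti : ∀ t ∈ Set.Ioo (0:ℝ) 1, ∀ i, ‖(t:ℂ) * x i‖ < 1 := by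
    intro t ht i
    rw [norm_mul, Complex.norm_real, Real.norm_eq_abs, abs_of_pos ht.1]
    nlinarith [ht.1, ht.2, hx i, norm_nonneg (x i)]
  have hpoint : ∀ t ∈ Set.Ioo (0:ℝ) 1, HasSum (fun m => fm m t)
      ((t:ℂ) ^ (lam0 - 1) * ((1 - t : ℝ) : ℂ) ^ (μ - lam0 - 1) *
        ∏ i, ((1:ℂ) - (t:ℂ) * x i) ^ (-lam i)) := by
    intro t ht
    have hsum_i : ∀ i, HasSum (fun k => poch (lam i) k / k.factorial * ((t:ℂ) * x i) ^ k)
        (((1:ℂ) - (t:ℂ) * x i) ^ (-lam i)) := fun i => hasSum_binomial _ _ (hti t ht i)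
    have hnorm_i : ∀ i, Summable fun k => ‖poch (lam i) k / k.factorial * ((t:ℂ) * x i) ^ k‖ :=
      fun i => summable_norm_binomial _ _ (hti t ht i)
    exact (pi_hasSum n _ _ hsum_i hnorm_i).mul_left _
  have hfm_eq : ∀ (m : Fin n → ℕ), ∀ t ∈ Set.Ioo (0:ℝ) 1, fm m t
      = (∏ i, g i (m i)) * ((t:ℂ) ^ (lam0 + (∑ i, m i : ℕ) - 1) * ((1:ℂ) - (t:ℂ)) ^ (μ - lam0 - 1)) := by
    intro m t ht
    have ht0 : (t:ℂ) ≠ 0 := by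
      simp only [ne_eq, Complex.ofReal_eq_zero]
      exact ne_of_gt ht.1
    have h1 : (∏ i, (poch (lam i) (m i) / ((m i).factorial : ℂ) * ((t:ℂ) * x i) ^ (m i)))
        = (∏ i, g i (m i)) * (t:ℂ) ^ (∑ i, m i) := by
      rw [← Finset.prod_pow_eq_pow_sum, ← Finset.prod_mul_distrib]
      apply Finset.prod_congr rfl
      intro i _
      rw [mul_pow]
      simp only [hgdef]
      ring
    have h2 : (t:ℂ) ^ (lam0 - 1) * (t:ℂ) ^ ((∑ i, m i : ℕ)) = (t:ℂ) ^ (lam0 + (∑ i, m i : ℕ) - 1) := by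
      rw [← Complex.cpow_natCast, ← Complex.cpow_add _ _ ht0]
      congr 1
      ring
    simp only [hfm]
    rw [h1, Complex.ofReal_sub, Complex.ofReal_one]
    rw [← h2]
    ring
  have hfm_int : ∀ m : Fin n → ℕ, IntegrableOn (fm m) (Set.Ioo (0:ℝ) 1) := by
    intro m
    have hS : 0 < (lam0 + ((∑ i, m i : ℕ) : ℂ)).re := by
      rw [Complex.add_re, Complex.natCast_re]
      have : (0:ℝ) ≤ ((∑ i, m i : ℕ) : ℝ) := Nat.cast_nonneg _
      linarith
    have h := (beta_integrableOn hS hμ).const_mul (∏ i, g i (m i))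
    refine MeasureTheory.IntegrableOn.congr_fun h (fun t ht => ?_) measurableSet_Ioo
    exact (hfm_eq m t ht).symm
  have hfm_integral : ∀ m : Fin n → ℕ, (∫ t in Set.Ioo (0:ℝ) 1, fm m t)
      = (∏ i, g i (m i)) * Complex.betaIntegral (lam0 + (∑ i, m i : ℕ)) (μ - lam0) := by
    intro m
    rw [MeasureTheory.setIntegral_congr_fun measurableSet_Ioo (hfm_eq m)]
    rw [integral_const_mul, betaIntegral_eq_Ioo]
  -- lintegral bound for sum/integral exchange
  have hlint : (∑' m : Fin n → ℕ, ∫⁻ t in Set.Ioo (0:ℝ) 1, ‖fm m t‖₊) ≠ ⊤ := by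
    have hβint : IntegrableOn (fun t : ℝ => t ^ (lam0.re - 1) * (1 - t) ^ ((μ - lam0).re - 1))
        (Set.Ioo (0:ℝ) 1) := rbeta_integrableOn hlam0 hμ
    have hbm : ∀ m : Fin n → ℕ, (∫⁻ t in Set.Ioo (0:ℝ) 1, ‖fm m t‖₊)
        ≤ ENNReal.ofReal ((∏ i, ‖g i (m i)‖) * rbeta lam0.re (μ - lam0).re) := by
      intro m
      have hnn : 0 ≤ ∏ i, ‖g i (m i)‖ := Finset.prod_nonneg fun i _ => norm_nonneg _
      have step1 : (∫⁻ t in Set.Ioo (0:ℝ) 1, ‖fm m t‖₊)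
          ≤ ∫⁻ t in Set.Ioo (0:ℝ) 1, ENNReal.ofReal ((∏ i, ‖g i (m i)‖) *
              (t ^ (lam0.re - 1) * (1 - t) ^ ((μ - lam0).re - 1))) := by
        apply MeasureTheory.lintegral_mono_ae
        rw [MeasureTheory.ae_restrict_iff' measurableSet_Ioo]
        apply MeasureTheory.ae_of_all
        intro t ht
        rw [show (‖fm m t‖₊ : ENNReal) = ENNReal.ofReal ‖fm m t‖ from (ofReal_norm _).symm]
        apply ENNReal.ofReal_le_ofReal
        rw [hfm_eq m t ht, norm_mul, norm_prod]
        exact mul_le_mul_of_nonneg_left (beta_integrand_le ht lam0 (μ - lam0) _) hnn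
      have step2 : (∫⁻ t in Set.Ioo (0:ℝ) 1, ENNReal.ofReal ((∏ i, ‖g i (m i)‖) *
              (t ^ (lam0.re - 1) * (1 - t) ^ ((μ - lam0).re - 1))))
          = ENNReal.ofReal ((∏ i, ‖g i (m i)‖) * rbeta lam0.re (μ - lam0).re) := by
        rw [← MeasureTheory.ofReal_integral_eq_lintegral_ofReal (hβint.const_mul _)]
        · rw [integral_const_mul]
          rfl
        · rw [Filter.EventuallyLE, MeasureTheory.ae_restrict_iff' measurableSet_Ioo]
          apply MeasureTheory.ae_of_all
          intro t ht
          have h0 := ht.1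
          have h1 : (0:ℝ) < 1 - t := by linarith [ht.2]
          positivity
      exact step1.trans_eq step2
    refine ne_top_of_le_ne_top ?_ (ENNReal.tsum_le_tsum hbm)
    rw [← ENNReal.ofReal_tsum_of_nonneg
      (fun m => mul_nonneg (Finset.prod_nonneg fun i _ => norm_nonneg _) (rbeta_nonneg _ _))
      (hPi.mul_right _)]
    exact ENNReal.ofReal_ne_top
  have hexchange : (∫ t in Set.Ioo (0:ℝ) 1, ∑' m : Fin n → ℕ, fm m t)
      = ∑' m : Fin n → ℕ, ∫ t in Set.Ioo (0:ℝ) 1, fm m t :=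
    MeasureTheory.integral_tsum (fun m => (hfm_int m).aestronglyMeasurable) hlint
  have hleft : (∫ t in Set.Ioo (0:ℝ) 1, ∑' m : Fin n → ℕ, fm m t)
      = ∫ t in Set.Ioo (0:ℝ) 1,
          ((t:ℂ) ^ (lam0 - 1) * ((1 - t : ℝ) : ℂ) ^ (μ - lam0 - 1) *
            ∏ i, ((1:ℂ) - (t:ℂ) * x i) ^ (-lam i)) :=
    MeasureTheory.setIntegral_congr_fun measurableSet_Ioo (fun t ht => (hpoint t ht).tsum_eq)
  refine ⟨goal1, goal2, ?_⟩
  calc (∑' m : Fin n → ℕ, T m)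
      = ∑' m : Fin n → ℕ, G * ((∏ i, g i (m i)) *
          Complex.betaIntegral (lam0 + (∑ i, m i : ℕ)) (μ - lam0)) := by
        apply tsum_congr
        intro m
        rw [hterm m, poch_ratio_beta hlam0 hμ]
        ring
    _ = G * ∑' m : Fin n → ℕ, ((∏ i, g i (m i)) *
          Complex.betaIntegral (lam0 + (∑ i, m i : ℕ)) (μ - lam0)) := tsum_mul_left
    _ = G * ∑' m : Fin n → ℕ, ∫ t in Set.Ioo (0:ℝ) 1, fm m t := by
        congr 1
        exact tsum_congr fun m => (hfm_integral m).symm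
    _ = G * ∫ t in Set.Ioo (0:ℝ) 1, ∑' m : Fin n → ℕ, fm m t := by rw [hexchange]
    _ = G * ∫ t in Set.Ioo (0:ℝ) 1,
          ((t:ℂ) ^ (lam0 - 1) * ((1 - t : ℝ) : ℂ) ^ (μ - lam0 - 1) *
            ∏ i, ((1:ℂ) - (t:ℂ) * x i) ^ (-lam i)) := by rw [hleft]
end
end
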